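/- arXiv:2012.07782 — 2 statements merged into one kernel-verified Lean document; each statement's English description precedes it below -/
import Mathlib

section
/- limsup_{n→∞} (2π/n)·log|F_n| ≤ 32·Λ(π/4) (= 4·v_oct, where 4 is the number of crossings of the 2-by-2 square weave). [Proposition 6.1 of the paper, specialized to the explicit state sum for the 2-by-2 square weave.] -/
open Finset Filter Real Complex

/-- The quantum integer factorial `{k}!_n = ∏_{j=1}^k 2i sin(jπ/n)`. -/
noncomputable def qf (n k : ℕ) : ℂ :=
  ∏ j ∈ Finset.Icc 1 k, (2 * Complex.I * Complex.sin ((j : ℂ) * Real.pi / n))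

/-- The state sum `F_n = J_n^T(W; e^{2πi/n})` for the 2-by-2 square weave. -/
noncomputable def F (n : ℕ) : ℂ :=
  ∑ m ∈ Finset.range n, ∑ a ∈ Finset.range (n - m), ∑ b ∈ Finset.range (n - m),
    ∑ c ∈ Finset.range (n - m), ∑ d ∈ Finset.range (n - m),
      Complex.exp (2 * Real.pi * Complex.I * ((a : ℂ) - c) * ((d : ℂ) - b) / n) *
        ((qf n m)⁻¹) ^ 4 *
        ((qf n (a + m) * qf n (b + m) * qf n (c + m) * qf n (d + m)) /
            (qf n a * qf n b * qf n c * qf n d)) ^ 2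

/-- The Lobachevsky function `Λ(x) = -∫₀ˣ log|2 sin t| dt`. -/
noncomputable def lob (x : ℝ) : ℝ := -∫ t in (0:ℝ)..x, Real.log |2 * Real.sin t|

open MeasureTheory intervalIntegral Set

set_option linter.unusedSectionVars false

namespace VB

noncomputable def g (t : ℝ) : ℝ := Real.log |2 * Real.sin t|

lemma g_eq {t : ℝ} (h0 : 0 ≤ t) (h1 : t ≤ Real.pi) : g t = Real.log (2 * Real.sin t) := by
  have hs := Real.sin_nonneg_of_nonneg_of_le_pi h0 h1
  rw [g, _root_.abs_of_nonneg (by positivity : (0:ℝ) ≤ 2 * Real.sin t)]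

lemma g_sym (t : ℝ) : g (Real.pi - t) = g t := by
  simp [g, Real.sin_pi_sub]

lemma g_neg (t : ℝ) : g (-t) = g t := by
  simp only [g, Real.sin_neg, mul_neg, abs_neg]

lemma g_le_log_two (t : ℝ) : g t ≤ Real.log 2 := by
  rcases eq_or_lt_of_le (abs_nonneg (2 * Real.sin t)) with h | h
  · rw [g, ← h, Real.log_zero]; exact Real.log_nonneg one_le_two
  · apply Real.log_le_log h
    calc |2 * Real.sin t| = 2 * |Real.sin t| := by rw [abs_mul]; norm_num
    _ ≤ 2 * 1 := by nlinarith [abs_sin_le_one t]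
    _ = 2 := by norm_num

lemma log_two_le_one : Real.log 2 ≤ 1 := by
  nlinarith [Real.log_le_sub_one_of_pos (show (0:ℝ) < 2 by norm_num)]

lemma sin_lb {t : ℝ} (h0 : 0 ≤ t) (h1 : t ≤ Real.pi) :
    2 / Real.pi * min t (Real.pi - t) ≤ Real.sin t := by
  have hpi : (0:ℝ) < 2 / Real.pi := by positivity
  rcases le_total t (Real.pi / 2) with h | h
  · calc 2 / Real.pi * min t (Real.pi - t) ≤ 2 / Real.pi * t :=
          mul_le_mul_of_nonneg_left (min_le_left _ _) hpi.le
    _ ≤ Real.sin t := Real.mul_le_sin h0 h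
  · have h2 : Real.pi - t ≤ Real.pi / 2 := by linarith
    have h3 : 0 ≤ Real.pi - t := by linarith
    calc 2 / Real.pi * min t (Real.pi - t) ≤ 2 / Real.pi * (Real.pi - t) :=
          mul_le_mul_of_nonneg_left (min_le_right _ _) hpi.le
    _ ≤ Real.sin (Real.pi - t) := Real.mul_le_sin h3 h2
    _ = Real.sin t := Real.sin_pi_sub t

lemma neg_log_le {t : ℝ} (h : 0 < t) : -Real.log t ≤ 2 / Real.sqrt t := by
  have hs : 0 < Real.sqrt t := Real.sqrt_pos.2 h
  have h1 : Real.log (1 / Real.sqrt t) ≤ 1 / Real.sqrt t - 1 :=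
    Real.log_le_sub_one_of_pos (by positivity)
  have h2 : Real.log (1 / Real.sqrt t) = - (1/2) * Real.log t := by
    rw [Real.log_div one_ne_zero (ne_of_gt hs), Real.log_one, Real.log_sqrt h.le]; ring
  have h3 : 2 * (1 / Real.sqrt t) = 2 / Real.sqrt t := by ring
  linarith

lemma g_abs_le {t : ℝ} (h0 : 0 < t) (h1 : t < Real.pi) :
    |g t| ≤ 10 + 2 / Real.sqrt t + 2 / Real.sqrt (Real.pi - t) := by
  have hst : 0 < Real.sqrt t := Real.sqrt_pos.2 h0
  have hst' : 0 < Real.sqrt (Real.pi - t) := Real.sqrt_pos.2 (by linarith)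
  have hsin : 0 < Real.sin t := Real.sin_pos_of_pos_of_lt_pi h0 h1
  have hd1 : (0:ℝ) ≤ 2 / Real.sqrt t := by positivity
  have hd2 : (0:ℝ) ≤ 2 / Real.sqrt (Real.pi - t) := by positivity
  rw [abs_le]
  constructor
  · rw [g_eq h0.le h1.le]
    have hmin : 0 < min t (Real.pi - t) := lt_min h0 (by linarith)
    have hlb : 2 / Real.pi * min t (Real.pi - t) ≤ Real.sin t := sin_lb h0.le h1.le
    have l1 : Real.log (2 * (2 / Real.pi * min t (Real.pi - t))) ≤ Real.log (2 * Real.sin t) := by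
      apply Real.log_le_log (by positivity); nlinarith
    have hmin2 : t * (Real.pi - t) / Real.pi ≤ min t (Real.pi - t) := by
      rcases le_total t (Real.pi - t) with h | h
      · rw [min_eq_left h, div_le_iff₀ Real.pi_pos]; nlinarith
      · rw [min_eq_right h, div_le_iff₀ Real.pi_pos]; nlinarith
    have hxpos : (0:ℝ) < 2 * (2 / Real.pi * (t * (Real.pi - t) / Real.pi)) := by
      have : 0 < Real.pi - t := by linarith
      positivity
    have l2 : Real.log (2 * (2 / Real.pi * (t * (Real.pi - t) / Real.pi))) ≤
        Real.log (2 * (2 / Real.pi * min t (Real.pi - t))) := by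
      apply Real.log_le_log hxpos
      have hpi : (0:ℝ) < 2 / Real.pi := by positivity
      nlinarith
    have hx : 2 * (2 / Real.pi * (t * (Real.pi - t) / Real.pi)) =
        (4 / Real.pi ^ 2) * t * (Real.pi - t) := by ring
    have hc : (0:ℝ) < 4 / Real.pi ^ 2 := by positivity
    have hπt : (0:ℝ) < Real.pi - t := by linarith
    have l3 : Real.log ((4 / Real.pi ^ 2) * t * (Real.pi - t)) =
        Real.log (4 / Real.pi ^ 2) + Real.log t + Real.log (Real.pi - t) := by
      rw [Real.log_mul (mul_pos hc h0).ne' hπt.ne', Real.log_mul hc.ne' h0.ne']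
    have l4 : -Real.log (4 / Real.pi ^ 2) ≤ 2 := by
      have hπ4 : Real.log Real.pi ≤ Real.log 4 :=
        Real.log_le_log Real.pi_pos Real.pi_le_four
      have h4 : Real.log 4 = 2 * Real.log 2 := by
        rw [show (4:ℝ) = 2^2 by norm_num, Real.log_pow]; push_cast; ring
      rw [Real.log_div (by norm_num) (by positivity), Real.log_pow]
      push_cast
      linarith [log_two_le_one]
    have l5 : -Real.log t ≤ 2 / Real.sqrt t := neg_log_le h0
    have l6 : -Real.log (Real.pi - t) ≤ 2 / Real.sqrt (Real.pi - t) := neg_log_le hπt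
    rw [hx] at l2
    linarith
  · linarith [g_le_log_two t, log_two_le_one]

lemma g_meas : Measurable g := Real.measurable_log.comp (Real.measurable_sin.const_mul 2).abs

noncomputable def φ (t : ℝ) : ℝ :=
  10 + 2 * t ^ (-(1:ℝ)/2) + 2 * (Real.pi - t) ^ (-(1:ℝ)/2)

lemma φ_II {a b : ℝ} : IntervalIntegrable φ volume a b := by
  apply IntervalIntegrable.add
  apply IntervalIntegrable.add
  · exact intervalIntegrable_const
  · exact (intervalIntegral.intervalIntegrable_rpow' (by norm_num)).const_mul 2
  · have h := (intervalIntegral.intervalIntegrable_rpow'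
      (a := Real.pi - a) (b := Real.pi - b) (r := -(1:ℝ)/2) (by norm_num)).comp_sub_left Real.pi
    simpa using h.const_mul 2

lemma φ_eq {t : ℝ} (h0 : 0 < t) (h1 : t < Real.pi) :
    φ t = 10 + 2 / Real.sqrt t + 2 / Real.sqrt (Real.pi - t) := by
  have e : ∀ x : ℝ, 0 < x → x ^ (-(1:ℝ)/2) = 1 / Real.sqrt x := by
    intro x hx
    rw [show (-(1:ℝ)/2) = -(1/2 : ℝ) by norm_num, Real.rpow_neg hx.le, Real.sqrt_eq_rpow]
    simp
  rw [φ, e t h0, e (Real.pi - t) (by linarith)]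
  ring

lemma g_abs_le_φ {t : ℝ} (h0 : 0 < t) (h1 : t < Real.pi) : |g t| ≤ φ t := by
  rw [φ_eq h0 h1]; exact g_abs_le h0 h1

lemma g_IntOn : IntegrableOn g (Set.Icc 0 Real.pi) volume := by
  rw [integrableOn_Icc_iff_integrableOn_Ioo]
  have hφ : IntegrableOn φ (Set.Ioo 0 Real.pi) volume :=
    ((intervalIntegrable_iff_integrableOn_Ioc_of_le Real.pi_pos.le).1 φ_II).mono_set
      Set.Ioo_subset_Ioc_self
  apply Integrable.mono' hφ g_meas.aestronglyMeasurable
  rw [ae_restrict_iff' measurableSet_Ioo]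
  exact Eventually.of_forall fun t ht => by
    rw [Real.norm_eq_abs]; exact g_abs_le_φ ht.1 ht.2

lemma gII {a b : ℝ} (ha : a ∈ Set.Icc 0 Real.pi) (hb : b ∈ Set.Icc 0 Real.pi) :
    IntervalIntegrable g volume a b :=
  (g_IntOn.mono_set (Set.uIcc_subset_Icc ha hb)).intervalIntegrable

lemma intMono {f₁ f₂ : ℝ → ℝ} {a b : ℝ} (hab : a ≤ b)
    (h₁ : IntervalIntegrable f₁ volume a b) (h₂ : IntervalIntegrable f₂ volume a b)
    (h : ∀ t ∈ Set.Ioo a b, f₁ t ≤ f₂ t) :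
    (∫ t in a..b, f₁ t) ≤ ∫ t in a..b, f₂ t := by
  rw [intervalIntegral.integral_of_le hab, intervalIntegral.integral_of_le hab,
    MeasureTheory.integral_Ioc_eq_integral_Ioo, MeasureTheory.integral_Ioc_eq_integral_Ioo]
  exact setIntegral_mono_on (h₁.1.mono_set Set.Ioo_subset_Ioc_self)
    (h₂.1.mono_set Set.Ioo_subset_Ioc_self) measurableSet_Ioo h

lemma intCongr {f₁ f₂ : ℝ → ℝ} {a b : ℝ} (hab : a ≤ b)
    (h : ∀ t ∈ Set.Ioo a b, f₁ t = f₂ t) :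
    (∫ t in a..b, f₁ t) = ∫ t in a..b, f₂ t := by
  rw [intervalIntegral.integral_of_le hab, intervalIntegral.integral_of_le hab,
    MeasureTheory.integral_Ioc_eq_integral_Ioo, MeasureTheory.integral_Ioc_eq_integral_Ioo]
  exact setIntegral_congr_fun measurableSet_Ioo h

lemma sqrt_sub_le {a b : ℝ} (h0 : 0 ≤ a) (hab : a ≤ b) :
    Real.sqrt b - Real.sqrt a ≤ Real.sqrt (b - a) := by
  have h1 : Real.sqrt b ≤ Real.sqrt a + Real.sqrt (b - a) := by
    have h2 : b ≤ (Real.sqrt a + Real.sqrt (b - a))^2 := by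
      have := Real.sq_sqrt h0
      have := Real.sq_sqrt (by linarith : (0:ℝ) ≤ b - a)
      have := Real.sqrt_nonneg a
      have := Real.sqrt_nonneg (b - a)
      nlinarith
    calc Real.sqrt b ≤ Real.sqrt ((Real.sqrt a + Real.sqrt (b - a))^2) := Real.sqrt_le_sqrt h2
    _ = Real.sqrt a + Real.sqrt (b - a) := Real.sqrt_sq (by positivity)
  linarith

lemma cell_bound {a b : ℝ} (h0 : 0 ≤ a) (hab : a ≤ b) (hb : b ≤ Real.pi) :
    |∫ t in a..b, g t| ≤ 10 * (b - a) + 8 * Real.sqrt (b - a) := by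
  have hgab : IntervalIntegrable g volume a b := gII ⟨h0, by linarith⟩ ⟨by linarith, hb⟩
  have h1 : |∫ t in a..b, g t| ≤ ∫ t in a..b, |g t| :=
    intervalIntegral.abs_integral_le_integral_abs hab
  have h2 : (∫ t in a..b, |g t|) ≤ ∫ t in a..b, φ t := by
    apply intMono hab hgab.abs φ_II
    intro t ht
    exact g_abs_le_φ (lt_of_le_of_lt h0 ht.1) (lt_of_lt_of_le ht.2 hb)
  have e1 : (∫ t in a..b, t ^ (-(1:ℝ)/2)) = 2 * Real.sqrt b - 2 * Real.sqrt a := by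
    rw [integral_rpow (Or.inl (by norm_num))]
    rw [Real.sqrt_eq_rpow, Real.sqrt_eq_rpow]
    norm_num
    ring
  have e2 : (∫ t in a..b, (Real.pi - t) ^ (-(1:ℝ)/2))
      = 2 * Real.sqrt (Real.pi - a) - 2 * Real.sqrt (Real.pi - b) := by
    rw [intervalIntegral.integral_comp_sub_left (fun s => s ^ (-(1:ℝ)/2)) Real.pi,
      integral_rpow (Or.inl (by norm_num))]
    rw [Real.sqrt_eq_rpow, Real.sqrt_eq_rpow]
    norm_num
    ring
  have e3 : (∫ t in a..b, φ t) = 10 * (b - a) + 2 * ((∫ t in a..b, t ^ (-(1:ℝ)/2)))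
      + 2 * ((∫ t in a..b, (Real.pi - t) ^ (-(1:ℝ)/2))) := by
    have i1 : IntervalIntegrable (fun t : ℝ => t ^ (-(1:ℝ)/2)) volume a b :=
      intervalIntegral.intervalIntegrable_rpow' (by norm_num)
    have i2 : IntervalIntegrable (fun t : ℝ => (Real.pi - t) ^ (-(1:ℝ)/2)) volume a b := by
      have h := (intervalIntegral.intervalIntegrable_rpow'
        (a := Real.pi - a) (b := Real.pi - b) (r := -(1:ℝ)/2) (by norm_num)).comp_sub_left Real.pi
      simpa using h
    simp only [φ]
    rw [intervalIntegral.integral_add (intervalIntegrable_const.add (i1.const_mul 2))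
        (i2.const_mul 2),
      intervalIntegral.integral_add intervalIntegrable_const (i1.const_mul 2),
      intervalIntegral.integral_const, intervalIntegral.integral_const_mul,
      intervalIntegral.integral_const_mul]
    simp [smul_eq_mul]
    ring
  have s1 : Real.sqrt b - Real.sqrt a ≤ Real.sqrt (b - a) := sqrt_sub_le h0 hab
  have s2 : Real.sqrt (Real.pi - a) - Real.sqrt (Real.pi - b) ≤ Real.sqrt (b - a) := by
    have := sqrt_sub_le (by linarith : (0:ℝ) ≤ Real.pi - b) (by linarith : Real.pi - b ≤ Real.pi - a)
    simpa [show Real.pi - a - (Real.pi - b) = b - a by ring] using this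
  calc |∫ t in a..b, g t| ≤ ∫ t in a..b, φ t := le_trans h1 h2
  _ = 10 * (b - a) + 2 * ((∫ t in a..b, t ^ (-(1:ℝ)/2)))
      + 2 * ((∫ t in a..b, (Real.pi - t) ^ (-(1:ℝ)/2))) := e3
  _ ≤ 10 * (b - a) + 8 * Real.sqrt (b - a) := by rw [e1, e2]; linarith

lemma lob_eq (x : ℝ) : lob x = -∫ t in (0:ℝ)..x, g t := rfl

lemma lob_zero : lob 0 = 0 := by simp [lob_eq]

lemma lob_diff {a b : ℝ} (ha : a ∈ Set.Icc 0 Real.pi) (hb : b ∈ Set.Icc 0 Real.pi) :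
    (∫ t in a..b, g t) = lob a - lob b := by
  have h0 : (0:ℝ) ∈ Set.Icc 0 Real.pi := ⟨le_refl 0, Real.pi_pos.le⟩
  have h := integral_add_adjacent_intervals (gII h0 ha) (gII ha hb)
  rw [lob_eq, lob_eq]
  linarith

lemma refl_int (a b : ℝ) :
    (∫ t in (Real.pi - b)..(Real.pi - a), g t) = ∫ t in a..b, g t := by
  rw [← intervalIntegral.integral_comp_sub_left g Real.pi]
  simp only [g_sym]

lemma pi_mem : Real.pi ∈ Set.Icc 0 Real.pi := ⟨Real.pi_pos.le, le_refl _⟩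
lemma zero_mem : (0:ℝ) ∈ Set.Icc 0 Real.pi := ⟨le_refl _, Real.pi_pos.le⟩
lemma half_mem : Real.pi/2 ∈ Set.Icc 0 Real.pi := ⟨by positivity, by linarith [Real.pi_pos]⟩

lemma lob_pi_div_two : lob (Real.pi/2) = 0 := by
  set A := ∫ t in (0:ℝ)..(Real.pi/2), g t with hA
  have h1 : (∫ t in (0:ℝ)..Real.pi, g t) = 2 * A := by
    have hsplit := integral_add_adjacent_intervals (gII zero_mem half_mem) (gII half_mem pi_mem)
    have hrefl : (∫ t in (Real.pi/2)..Real.pi, g t) = A := by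
      have := refl_int 0 (Real.pi/2)
      rw [show Real.pi - Real.pi/2 = Real.pi/2 by ring, sub_zero] at this
      rw [this]
    linarith
  have h2 : (∫ u in (0:ℝ)..(Real.pi/2), g (2*u)) = A := by
    rw [intervalIntegral.integral_comp_mul_left g (two_ne_zero)]
    rw [mul_zero, show (2:ℝ) * (Real.pi/2) = Real.pi by ring, h1]
    simp
  have h3 : (∫ u in (0:ℝ)..(Real.pi/2), g (2*u))
      = ∫ u in (0:ℝ)..(Real.pi/2), (g u + g (Real.pi/2 - u)) := by
    apply intCongr (by positivity)
    intro u hu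
    have hs : 0 < Real.sin u := Real.sin_pos_of_pos_of_lt_pi hu.1 (by nlinarith [hu.2, Real.pi_pos])
    have hc : 0 < Real.cos u := Real.cos_pos_of_mem_Ioo ⟨by linarith [hu.1, Real.pi_pos], hu.2⟩
    have e1 : |2 * Real.sin (2*u)| = |2 * Real.sin u| * |2 * Real.cos u| := by
      rw [Real.sin_two_mul, ← abs_mul]
      ring_nf
    rw [g, e1, Real.log_mul (by positivity) (by positivity), g, g, Real.sin_pi_div_two_sub]
  have h4 : (∫ u in (0:ℝ)..(Real.pi/2), (g u + g (Real.pi/2 - u))) = 2 * A := by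
    have i1 : IntervalIntegrable g volume 0 (Real.pi/2) := gII zero_mem half_mem
    have i2 : IntervalIntegrable (fun u => g (Real.pi/2 - u)) volume 0 (Real.pi/2) := by
      have := i1.comp_sub_left (Real.pi/2)
      simpa using this.symm
    rw [intervalIntegral.integral_add i1 i2,
      intervalIntegral.integral_comp_sub_left g (Real.pi/2)]
    simp only [sub_zero, sub_self]
    have : (∫ t in (Real.pi/2 - Real.pi/2)..(Real.pi/2), g t) = A := by
      rw [sub_self]
    linarith [this]
  have hA0 : A = 0 := by
    rw [h3, h4] at h2
    linarith
  rw [lob_eq, ← hA, hA0, neg_zero]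

lemma centered {m : ℝ} (h0 : 0 ≤ m) (h1 : m ≤ Real.pi) :
    (∫ t in ((Real.pi - m)/2)..((Real.pi + m)/2), g t) = 2 * lob ((Real.pi - m)/2) := by
  have hmem1 : (Real.pi - m)/2 ∈ Set.Icc 0 Real.pi := ⟨by linarith, by linarith [Real.pi_pos]⟩
  have hmem2 : (Real.pi + m)/2 ∈ Set.Icc 0 Real.pi := ⟨by linarith, by linarith⟩
  have hsplit := integral_add_adjacent_intervals (gII hmem1 half_mem) (gII half_mem hmem2)
  have hrefl : (∫ t in (Real.pi/2)..((Real.pi + m)/2), g t)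
      = ∫ t in ((Real.pi - m)/2)..(Real.pi/2), g t := by
    have := refl_int ((Real.pi - m)/2) (Real.pi/2)
    rw [show Real.pi - Real.pi/2 = Real.pi/2 by ring,
      show Real.pi - (Real.pi - m)/2 = (Real.pi + m)/2 by ring] at this
    rw [this]
  have hval : (∫ t in ((Real.pi - m)/2)..(Real.pi/2), g t)
      = lob ((Real.pi - m)/2) - lob (Real.pi/2) := lob_diff hmem1 half_mem
  rw [lob_pi_div_two] at hval
  linarith

lemma sin_le_cos {x : ℝ} (h0 : 0 ≤ x) (h1 : x ≤ Real.pi/4) : Real.sin x ≤ Real.cos x := by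
  have h2 : 0 ≤ Real.cos (x + Real.pi/4) := by
    apply Real.cos_nonneg_of_mem_Icc
    constructor
    · linarith [Real.pi_pos]
    · linarith
  have h3 := Real.cos_add x (Real.pi/4)
  rw [Real.cos_pi_div_four, Real.sin_pi_div_four] at h3
  nlinarith [Real.sqrt_pos.2 (show (0:ℝ) < 2 by norm_num)]

lemma cos_le_sin {x : ℝ} (h0 : Real.pi/4 ≤ x) (h1 : x ≤ Real.pi/2) : Real.cos x ≤ Real.sin x := by
  have := sin_le_cos (show 0 ≤ Real.pi/2 - x by linarith) (by linarith)
  rwa [Real.sin_pi_div_two_sub, Real.cos_pi_div_two_sub] at this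

noncomputable def eta (s : ℝ) : ℝ := 2 * g ((Real.pi - s)/2) - g s

lemma g_half (s : ℝ) : g ((Real.pi - s)/2) = Real.log |2 * Real.cos (s/2)| := by
  rw [g, show (Real.pi - s)/2 = Real.pi/2 - s/2 by ring, Real.sin_pi_div_two_sub]

lemma eta_nonneg {s : ℝ} (h0 : 0 ≤ s) (h1 : s ≤ Real.pi/2) : 0 ≤ eta s := by
  have hc : 0 < Real.cos (s/2) := by
    apply Real.cos_pos_of_mem_Ioo
    constructor <;> [linarith [Real.pi_pos]; linarith [Real.pi_pos]]
  have hcl : 1 ≤ 2 * Real.cos (s/2) := by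
    have h4 : Real.cos (s/2) ≥ Real.cos (Real.pi/4) := by
      apply Real.cos_le_cos_of_nonneg_of_le_pi (by positivity) (by linarith [Real.pi_pos])
      linarith
    rw [Real.cos_pi_div_four] at h4
    nlinarith [Real.sq_sqrt (show (0:ℝ) ≤ 2 by norm_num), Real.sqrt_nonneg 2]
  have hgc : 0 ≤ Real.log |2 * Real.cos (s/2)| := by
    apply Real.log_nonneg
    rw [_root_.abs_of_nonneg (by positivity)]
    exact hcl
  rcases eq_or_lt_of_le h0 with h | h
  · rw [eta, g_half, ← h]
    simp [g]
    linarith [hgc, Real.log_nonneg (by norm_num : (1:ℝ) ≤ 2)]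
  · have hs : 0 < Real.sin s := Real.sin_pos_of_pos_of_lt_pi h (by linarith [Real.pi_pos])
    have key : 2 * Real.sin s ≤ (2 * Real.cos (s/2))^2 := by
      have hd : Real.sin s = 2 * Real.sin (s/2) * Real.cos (s/2) := by
        rw [show s = 2 * (s/2) by ring, Real.sin_two_mul]
        ring_nf
      have hsc : Real.sin (s/2) ≤ Real.cos (s/2) := sin_le_cos (by linarith) (by linarith)
      have hsn : 0 ≤ Real.sin (s/2) := Real.sin_nonneg_of_nonneg_of_le_pi (by linarith)
        (by linarith [Real.pi_pos])
      nlinarith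
    rw [eta, g_half, g_eq h0 (by linarith [Real.pi_pos])]
    have l1 : Real.log (2 * Real.sin s) ≤ Real.log ((2 * Real.cos (s/2))^2) := by
      apply Real.log_le_log (by positivity) key
    rw [Real.log_pow] at l1
    rw [_root_.abs_of_nonneg (by positivity : (0:ℝ) ≤ 2 * Real.cos (s/2))]
    push_cast at l1
    linarith

lemma eta_nonpos {s : ℝ} (h0 : Real.pi/2 ≤ s) (h1 : s ≤ Real.pi) : eta s ≤ 0 := by
  rcases eq_or_lt_of_le h1 with h | h
  · rw [eta, g_half, h]
    simp [g, Real.cos_pi_div_two]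
  · have hs : 0 < Real.sin s :=
      Real.sin_pos_of_pos_of_lt_pi (by linarith [Real.pi_pos]) h
    have hc : 0 < Real.cos (s/2) := by
      apply Real.cos_pos_of_mem_Ioo
      constructor <;> [linarith [Real.pi_pos]; linarith]
    have key : (2 * Real.cos (s/2))^2 ≤ 2 * Real.sin s := by
      have hd : Real.sin s = 2 * Real.sin (s/2) * Real.cos (s/2) := by
        rw [show s = 2 * (s/2) by ring, Real.sin_two_mul]
        ring_nf
      have hsc : Real.cos (s/2) ≤ Real.sin (s/2) := cos_le_sin (by linarith) (by linarith)
      nlinarith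
    rw [eta, g_half, g_eq (by linarith [Real.pi_pos]) h1]
    have l1 : Real.log ((2 * Real.cos (s/2))^2) ≤ Real.log (2 * Real.sin s) := by
      apply Real.log_le_log (by positivity) key
    rw [Real.log_pow] at l1
    rw [_root_.abs_of_nonneg (by positivity : (0:ℝ) ≤ 2 * Real.cos (s/2))]
    push_cast at l1
    linarith

lemma quarter_mem : Real.pi/4 ∈ Set.Icc 0 Real.pi := ⟨by positivity, by linarith [Real.pi_pos]⟩

lemma etaI2 {m : ℝ} (h0 : 0 ≤ m) (h1 : m ≤ Real.pi) :
    (∫ s in (Real.pi/2)..m, g ((Real.pi - s)/2))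
      = 2 * (lob ((Real.pi - m)/2) - lob (Real.pi/4)) := by
  have hmem : (Real.pi - m)/2 ∈ Set.Icc 0 Real.pi := ⟨by linarith, by linarith [Real.pi_pos]⟩
  have e0 : (∫ s in (Real.pi/2)..m, g ((Real.pi - s)/2))
      = ∫ s in (Real.pi/2)..m, (fun x => g (x/2)) (Real.pi - s) := rfl
  rw [e0, intervalIntegral.integral_comp_sub_left (fun x => g (x/2)) Real.pi,
    intervalIntegral.integral_comp_div (f := g) (two_ne_zero),
    show Real.pi - Real.pi/2 = Real.pi/2 by ring,
    show (Real.pi/2)/2 = Real.pi/4 by ring,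
    lob_diff hmem quarter_mem]
  simp [smul_eq_mul]

lemma gHalfII {m : ℝ} (h0 : 0 ≤ m) (h1 : m ≤ Real.pi) :
    IntervalIntegrable (fun s => g ((Real.pi - s)/2)) volume (Real.pi/2) m := by
  have hmem : (Real.pi - m)/2 ∈ Set.Icc 0 Real.pi := ⟨by linarith, by linarith [Real.pi_pos]⟩
  have base : IntervalIntegrable g volume ((Real.pi - m)/2) (Real.pi/4) := gII hmem quarter_mem
  have step1 : IntervalIntegrable (fun x => g (x * (1/2))) volume (Real.pi - m) (Real.pi/2) := by
    have := base.comp_mul_right (c := 1/2)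
    rw [show ((Real.pi - m)/2)/(1/2) = Real.pi - m by ring,
      show (Real.pi/4)/(1/2) = Real.pi/2 by ring] at this
    exact this
  have step2 : IntervalIntegrable (fun s => g ((Real.pi - s) * (1/2))) volume (Real.pi/2) m := by
    have := step1.comp_sub_left Real.pi
    rw [show Real.pi - (Real.pi - m) = m by ring, show Real.pi - Real.pi/2 = Real.pi/2 by ring]
      at this
    exact this.symm
  have he : (fun s => g ((Real.pi - s) * (1/2))) = fun s => g ((Real.pi - s)/2) := by
    funext s; congr 1; ring
  rwa [he] at step2

lemma etaII {m : ℝ} (h0 : 0 ≤ m) (h1 : m ≤ Real.pi) :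
    IntervalIntegrable eta volume (Real.pi/2) m := by
  have hgm : IntervalIntegrable g volume (Real.pi/2) m := gII half_mem ⟨h0, h1⟩
  exact ((gHalfII h0 h1).const_mul 2).sub hgm

lemma chi_le {m : ℝ} (h0 : 0 ≤ m) (h1 : m ≤ Real.pi) :
    lob m + 4 * lob ((Real.pi - m)/2) ≤ 4 * lob (Real.pi/4) := by
  have hmem : (Real.pi - m)/2 ∈ Set.Icc 0 Real.pi := ⟨by linarith, by linarith [Real.pi_pos]⟩
  have I1 : (∫ s in (Real.pi/2)..m, g s) = - lob m := by
    rw [lob_diff half_mem ⟨h0, h1⟩, lob_pi_div_two]; ring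
  have I2 := etaI2 h0 h1
  have step3 : IntervalIntegrable (fun s => g ((Real.pi - s)/2)) volume (Real.pi/2) m :=
    gHalfII h0 h1
  have Ieta : (∫ s in (Real.pi/2)..m, eta s)
      = 4 * (lob ((Real.pi - m)/2) - lob (Real.pi/4)) + lob m := by
    have hgm : IntervalIntegrable g volume (Real.pi/2) m := gII half_mem ⟨h0, h1⟩
    have : (∫ s in (Real.pi/2)..m, eta s)
        = 2 * (∫ s in (Real.pi/2)..m, g ((Real.pi - s)/2)) - ∫ s in (Real.pi/2)..m, g s := by
      rw [show eta = fun s => 2 * g ((Real.pi - s)/2) - g s from rfl]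
      rw [intervalIntegral.integral_sub (step3.const_mul 2) hgm,
        intervalIntegral.integral_const_mul]
    rw [this, I1, I2]; ring
  have hsign : (∫ s in (Real.pi/2)..m, eta s) ≤ 0 := by
    rcases le_total m (Real.pi/2) with hcase | hcase
    · rw [intervalIntegral.integral_symm m (Real.pi/2)]
      have hpos : 0 ≤ ∫ s in m..(Real.pi/2), eta s := by
        apply intervalIntegral.integral_nonneg hcase
        intro s hs
        exact eta_nonneg (le_trans h0 hs.1) hs.2
      linarith
    · have : (∫ s in (Real.pi/2)..m, eta s) ≤ ∫ s in (Real.pi/2)..m, (0:ℝ) := by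
        apply intMono hcase (etaII h0 h1) (intervalIntegrable_const)
        intro s hs
        exact eta_nonpos hs.1.le (le_trans hs.2.le h1)
      simpa using this
  linarith [Ieta, hsign]

lemma shift_le {a m : ℝ} (ha : 0 ≤ a) (hm : 0 ≤ m) (hs : a + m ≤ Real.pi)
    (hc : a ≤ (Real.pi - m)/2) :
    (∫ t in a..(a+m), g t) ≤ ∫ t in ((Real.pi - m)/2)..((Real.pi + m)/2), g t := by
  have hmπ : m ≤ Real.pi := by linarith
  have haI : a ∈ Set.Icc 0 Real.pi := ⟨ha, by linarith⟩
  have hamI : a + m ∈ Set.Icc 0 Real.pi := ⟨by linarith, hs⟩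
  have hcI : (Real.pi - m)/2 ∈ Set.Icc 0 Real.pi := ⟨by linarith, by linarith [Real.pi_pos]⟩
  have hcmI : (Real.pi + m)/2 ∈ Set.Icc 0 Real.pi := ⟨by linarith [Real.pi_pos], by linarith⟩
  have A1 := integral_add_adjacent_intervals (gII haI hamI) (gII hamI hcmI)
  have A2 := integral_add_adjacent_intervals (gII haI hcI) (gII hcI hcmI)
  have key : (∫ t in a..((Real.pi - m)/2), g t) ≤ ∫ t in (a+m)..((Real.pi + m)/2), g t := by
    have e1 : (∫ t in (a+m)..((Real.pi + m)/2), g t) = ∫ t in a..((Real.pi - m)/2), g (t + m) := by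
      rw [intervalIntegral.integral_comp_add_right g m,
        show (Real.pi - m)/2 + m = (Real.pi + m)/2 by ring]
    rw [e1]
    have hig : IntervalIntegrable g volume a ((Real.pi - m)/2) := gII haI hcI
    have hig2 : IntervalIntegrable (fun t => g (t + m)) volume a ((Real.pi - m)/2) := by
      have := (gII hamI hcmI).comp_add_right m
      rw [show a + m - m = a by ring, show (Real.pi + m)/2 - m = (Real.pi - m)/2 by ring] at this
      exact this
    apply intMono hc hig hig2
    intro t ht
    have ht0 : 0 < t := lt_of_le_of_lt ha ht.1
    have htm : t + m ≤ Real.pi := by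
      have := ht.2; linarith [this]
    have hsin : 0 < Real.sin t := Real.sin_pos_of_pos_of_lt_pi ht0 (by linarith [ht.2, hm])
    have hmono : Real.sin t ≤ Real.sin (t + m) := by
      have hssub := Real.sin_sub_sin (t + m) t
      have hcos : 0 ≤ Real.cos ((t + m + t)/2) := by
        apply Real.cos_nonneg_of_mem_Icc
        constructor
        · linarith [Real.pi_pos, ht0, hm]
        · have := ht.2; linarith
      have hsm : 0 ≤ Real.sin ((t + m - t)/2) := by
        rw [show (t + m - t)/2 = m/2 by ring]
        apply Real.sin_nonneg_of_nonneg_of_le_pi (by linarith)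
        linarith [Real.pi_pos]
      nlinarith
    rw [g_eq ht0.le (by linarith [ht.2, hm]), g_eq (by linarith : (0:ℝ) ≤ t + m) htm]
    apply Real.log_le_log (by positivity)
    linarith
  linarith

lemma CL {a m : ℝ} (ha : 0 ≤ a) (hm : 0 ≤ m) (hs : a + m ≤ Real.pi) :
    lob m + 2 * (lob a - lob (a + m)) ≤ 4 * lob (Real.pi/4) := by
  have hmπ : m ≤ Real.pi := by linarith
  have haI : a ∈ Set.Icc 0 Real.pi := ⟨ha, by linarith⟩
  have hamI : a + m ∈ Set.Icc 0 Real.pi := ⟨by linarith, hs⟩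
  have hd : (∫ t in a..(a+m), g t) = lob a - lob (a+m) := lob_diff haI hamI
  have hcen := centered hm hmπ
  have hchi := chi_le hm hmπ
  rcases le_total a ((Real.pi - m)/2) with hc | hc
  · have := shift_le ha hm hs hc
    rw [hcen, hd] at this
    linarith
  · have ha' : 0 ≤ Real.pi - a - m := by linarith
    have hs' : (Real.pi - a - m) + m ≤ Real.pi := by linarith
    have hc' : Real.pi - a - m ≤ (Real.pi - m)/2 := by linarith
    have := shift_le ha' hm hs' hc'
    rw [hcen] at this
    have hrefl : (∫ t in (Real.pi - a - m)..(Real.pi - a - m + m), g t)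
        = ∫ t in a..(a+m), g t := by
      rw [show Real.pi - a - m + m = Real.pi - a by ring]
      have h2 := refl_int a (a + m)
      rw [show Real.pi - (a + m) = Real.pi - a - m by ring] at h2
      exact h2
    rw [hrefl, hd] at this
    linarith

lemma lob_pi4_nonneg : 0 ≤ lob (Real.pi/4) := by
  have := CL (a := 0) (m := 0) le_rfl le_rfl (by linarith [Real.pi_pos])
  simp [lob_zero] at this
  linarith


lemma sin_mono_both {t b : ℝ} (h0 : 0 ≤ t) (htb : t ≤ b) (hb : b ≤ Real.pi/2) :
    Real.sin t ≤ Real.sin b := by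
  have hss := Real.sin_sub_sin b t
  have h1 : 0 ≤ Real.sin ((b - t)/2) :=
    Real.sin_nonneg_of_nonneg_of_le_pi (by linarith) (by linarith [Real.pi_pos])
  have h2 : 0 ≤ Real.cos ((b + t)/2) := by
    apply Real.cos_nonneg_of_mem_Icc
    constructor <;> [linarith [Real.pi_pos]; linarith]
  nlinarith

lemma sin_anti_both {a t : ℝ} (ha : Real.pi/2 ≤ a) (hat : a ≤ t) (ht : t ≤ Real.pi) :
    Real.sin t ≤ Real.sin a := by
  have hss := Real.sin_sub_sin a t
  have h1 : Real.sin ((a - t)/2) ≤ 0 := by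
    have : Real.sin ((t - a)/2) ≥ 0 :=
      Real.sin_nonneg_of_nonneg_of_le_pi (by linarith) (by linarith [Real.pi_pos])
    have he : (a - t)/2 = -((t - a)/2) := by ring
    rw [he, Real.sin_neg]
    linarith
  have h2 : Real.cos ((a + t)/2) ≤ 0 := by
    apply Real.cos_nonpos_of_pi_div_two_le_of_le <;> [linarith; linarith [Real.pi_pos]]
  nlinarith

-- upper bound for the integral over a cell in the increasing region
lemma cell_up {a b : ℝ} (h0 : 0 ≤ a) (hab : a ≤ b) (hb2 : b ≤ Real.pi/2) :
    (∫ t in a..b, g t) ≤ (b - a) * g b := by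
  have hπ := Real.pi_pos
  have hbI : b ∈ Set.Icc 0 Real.pi := ⟨by linarith, by linarith⟩
  have h := intMono hab (gII ⟨h0, by linarith⟩ hbI) (_root_.intervalIntegrable_const (c := g b))
    (fun t ht => by
      have ht0 : 0 < t := lt_of_le_of_lt h0 ht.1
      have hsp : 0 < Real.sin t := Real.sin_pos_of_pos_of_lt_pi ht0 (by linarith [ht.2])
      rw [g_eq ht0.le (by linarith [ht.2]), g_eq (by linarith : (0:ℝ) ≤ b) (by linarith)]
      apply Real.log_le_log (by positivity)
      have := sin_mono_both ht0.le ht.2.le hb2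
      linarith)
  rw [intervalIntegral.integral_const, smul_eq_mul] at h
  exact h

-- lower bound for the integral over a cell in the decreasing region
lemma cell_anti_lb {a b : ℝ} (ha2 : Real.pi/2 ≤ a) (hab : a ≤ b) (hb : b ≤ Real.pi) :
    (∫ t in a..b, g t) ≤ (b - a) * g a := by
  have hπ := Real.pi_pos
  have h := intMono hab (gII ⟨by linarith, by linarith⟩ ⟨by linarith, hb⟩)
    (_root_.intervalIntegrable_const (c := g a))
    (fun t ht => by
      have hsp : 0 < Real.sin t :=
        Real.sin_pos_of_pos_of_lt_pi (by linarith [ht.1]) (by linarith [ht.2])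
      have hsa : Real.sin t ≤ Real.sin a := sin_anti_both ha2 ht.1.le (by linarith [ht.2])
      rw [g_eq (by linarith [ht.1] : (0:ℝ) ≤ t) (by linarith [ht.2]),
        g_eq (by linarith : (0:ℝ) ≤ a) (by linarith)]
      apply Real.log_le_log (by positivity)
      linarith)
  rw [intervalIntegral.integral_const, smul_eq_mul] at h
  exact h

-- lower bound for g-value times width by the integral, increasing region (a > 0)
lemma cell_up' {a b : ℝ} (h0 : 0 < a) (hab : a ≤ b) (hb2 : b ≤ Real.pi/2) :
    (b - a) * g a ≤ ∫ t in a..b, g t := by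
  have hπ := Real.pi_pos
  have h := intMono hab (_root_.intervalIntegrable_const (c := g a))
    (gII ⟨h0.le, by linarith⟩ ⟨by linarith, by linarith⟩)
    (fun t ht => by
      have hsp : 0 < Real.sin a := Real.sin_pos_of_pos_of_lt_pi h0 (by linarith)
      have hsa : Real.sin a ≤ Real.sin t := sin_mono_both h0.le ht.1.le (by linarith [ht.2])
      rw [g_eq h0.le (by linarith), g_eq (by linarith [ht.1] : (0:ℝ) ≤ t) (by linarith [ht.2])]
      apply Real.log_le_log (by positivity)
      linarith)
  rw [intervalIntegral.integral_const, smul_eq_mul] at h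
  exact h

-- lower bound by the value at the right end, decreasing region (b < π)
lemma cell_anti_ub' {a b : ℝ} (ha2 : Real.pi/2 ≤ a) (hab : a ≤ b) (hb : b < Real.pi) :
    (b - a) * g b ≤ ∫ t in a..b, g t := by
  have hπ := Real.pi_pos
  have h := intMono hab (_root_.intervalIntegrable_const (c := g b))
    (gII ⟨by linarith, by linarith⟩ ⟨by linarith, by linarith⟩)
    (fun t ht => by
      have hsp : 0 < Real.sin b := Real.sin_pos_of_pos_of_lt_pi (by linarith) hb
      have hsa : Real.sin b ≤ Real.sin t := sin_anti_both (by linarith [ht.1]) ht.2.le hb.le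
      rw [g_eq (by linarith : (0:ℝ) ≤ b) hb.le,
        g_eq (by linarith [ht.1] : (0:ℝ) ≤ t) (by linarith [ht.2])]
      apply Real.log_le_log (by positivity)
      linarith)
  rw [intervalIntegral.integral_const, smul_eq_mul] at h
  exact h

noncomputable def tau (n j : ℕ) : ℝ := (j:ℝ) * (Real.pi / n)
noncomputable def S (n k : ℕ) : ℝ := ∑ j ∈ Finset.Icc 1 k, g (tau n j)
noncomputable def cb (n : ℕ) : ℝ := 10 * (Real.pi/n) + 8 * Real.sqrt (Real.pi/n)

section Discrete
variable {n : ℕ} (hn : 8 ≤ n)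

include hn

lemma npos : (0:ℝ) < n := by
  have : 0 < n := by omega
  exact_mod_cast this

lemma hstep : (0:ℝ) < Real.pi / n := by
  have := npos hn
  positivity

lemma tau_zero : tau n 0 = 0 := by simp [tau]

lemma tau_mono {i j : ℕ} (hij : i ≤ j) : tau n i ≤ tau n j := by
  have : (i:ℝ) ≤ j := by exact_mod_cast hij
  have h := hstep hn
  rw [tau, tau]
  nlinarith

lemma tau_nonneg (j : ℕ) : 0 ≤ tau n j := by
  have := tau_mono hn (Nat.zero_le j)
  rwa [tau_zero hn] at this

lemma tau_n : tau n n = Real.pi := by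
  rw [tau]
  field_simp

lemma tau_le_pi {j : ℕ} (hj : j ≤ n) : tau n j ≤ Real.pi := by
  have := tau_mono hn hj
  rwa [tau_n hn] at this

lemma tau_lt_pi {j : ℕ} (hj : j < n) : tau n j < Real.pi := by
  have hj' : (j:ℝ) < n := by exact_mod_cast hj
  have h := hstep hn
  calc tau n j = (j:ℝ) * (Real.pi/n) := rfl
  _ < (n:ℝ) * (Real.pi/n) := by nlinarith
  _ = Real.pi := by field_simp

lemma tau_mem {j : ℕ} (hj : j ≤ n) : tau n j ∈ Set.Icc 0 Real.pi :=
  ⟨tau_nonneg hn j, tau_le_pi hn hj⟩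

lemma tau_succ (j : ℕ) : tau n (j+1) = tau n j + Real.pi/n := by
  rw [tau, tau]; push_cast; ring

lemma tau_add (i j : ℕ) : tau n (i+j) = tau n i + tau n j := by
  rw [tau, tau, tau]; push_cast; ring

lemma tau_half_le {j : ℕ} (hj : j ≤ n/2) : tau n j ≤ Real.pi/2 := by
  have h2 : 2 * (j:ℝ) ≤ n := by
    have : 2 * j ≤ n := by omega
    exact_mod_cast this
  have hn0 := npos hn
  rw [tau, mul_div_assoc', div_le_div_iff₀ hn0 (by norm_num : (0:ℝ) < 2)]
  nlinarith [Real.pi_pos]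

lemma tau_half_ge {j : ℕ} (hj : n/2 + 1 ≤ j) : Real.pi/2 ≤ tau n j := by
  have h2 : (n:ℝ) ≤ 2 * (j:ℝ) := by
    have : n ≤ 2 * j := by omega
    exact_mod_cast this
  have hn0 := npos hn
  rw [tau, mul_div_assoc', div_le_div_iff₀ (by norm_num : (0:ℝ) < 2) hn0]
  nlinarith [Real.pi_pos]

lemma S_zero : S n 0 = 0 := by simp [S]

lemma S_succ (k : ℕ) : S n (k+1) = S n k + g (tau n (k+1)) := by
  rw [S, S, Finset.sum_Icc_succ_top (by omega : 1 ≤ k+1)]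

lemma cb_nonneg : 0 ≤ cb n := by
  have := hstep hn
  rw [cb]
  positivity

lemma cellb {j : ℕ} (hj : j + 1 ≤ n) :
    |∫ t in (tau n j)..(tau n (j+1)), g t| ≤ cb n := by
  have h1 := cell_bound (tau_nonneg hn j) (tau_mono hn (Nat.le_succ j)) (tau_le_pi hn hj)
  rw [show tau n (j+1) - tau n j = Real.pi/n by rw [tau_succ hn]; ring] at h1
  exact h1

lemma hstep_le_cb : Real.pi / n ≤ cb n := by
  have h := hstep hn
  have : 0 ≤ Real.sqrt (Real.pi/n) := Real.sqrt_nonneg _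
  rw [cb]; nlinarith

lemma LB1 : ∀ k, k ≤ n/2 → (∫ t in (0:ℝ)..(tau n k), g t) ≤ (Real.pi/n) * S n k := by
  intro k
  induction k with
  | zero => intro _; rw [tau_zero hn, S_zero hn]; simp
  | succ k ih =>
    intro hk
    have hk' : k ≤ n/2 := by omega
    have hkn : k ≤ n := by omega
    have hsplit := integral_add_adjacent_intervals
      (gII (tau_mem (j := 0) hn (by omega)) (tau_mem hn hkn))
      (gII (tau_mem hn hkn) (tau_mem (j := k+1) hn (by omega)))
    rw [tau_zero hn] at hsplit
    have hcell : (∫ t in (tau n k)..(tau n (k+1)), g t) ≤ (Real.pi/n) * g (tau n (k+1)) := by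
      have := cell_up (tau_nonneg hn k) (tau_mono hn (Nat.le_succ k)) (tau_half_le hn hk)
      rw [show tau n (k+1) - tau n k = Real.pi/n by rw [tau_succ hn]; ring] at this
      exact this
    rw [S_succ hn]
    have := ih hk'
    linarith

lemma LB2 : ∀ k, n/2 + 1 ≤ k → k ≤ n - 1 →
    (∫ t in (tau n (n/2+1))..(tau n (k+1)), g t) ≤ (Real.pi/n) * (S n k - S n (n/2)) := by
  intro k hk
  induction k, hk using Nat.le_induction with
  | base =>
    intro _
    have hcell : (∫ t in (tau n (n/2+1))..(tau n (n/2+2)), g t)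
        ≤ (Real.pi/n) * g (tau n (n/2+1)) := by
      have := cell_anti_lb (tau_half_ge hn (le_refl _))
        (tau_mono (i := n/2+1) (j := n/2+2) hn (by omega))
        (tau_le_pi (j := n/2+2) hn (by omega))
      rw [show tau n (n/2+2) - tau n (n/2+1) = Real.pi/n by
        rw [show n/2+2 = (n/2+1)+1 by omega, tau_succ hn]; ring] at this
      exact this
    rw [show n/2+1+1 = n/2+2 by omega, S_succ hn]
    have : S n (n/2) + g (tau n (n/2+1)) - S n (n/2) = g (tau n (n/2+1)) := by ring
    rw [this] at *
    linarith [hcell]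
  | succ k hk ih =>
    intro hk1
    have ih' := ih (by omega)
    have hsplit := integral_add_adjacent_intervals
      (gII (tau_mem (j := n/2+1) hn (by omega)) (tau_mem (j := k+1) hn (by omega)))
      (gII (tau_mem (j := k+1) hn (by omega)) (tau_mem (j := k+2) hn (by omega)))
    have hcell : (∫ t in (tau n (k+1))..(tau n (k+2)), g t)
        ≤ (Real.pi/n) * g (tau n (k+1)) := by
      have := cell_anti_lb
        (le_trans (tau_half_ge hn (le_refl _)) (tau_mono (i := n/2+1) (j := k+1) hn (by omega)))
        (tau_mono (i := k+1) (j := k+2) hn (by omega)) (tau_le_pi (j := k+2) hn (by omega))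
      rw [show tau n (k+2) - tau n (k+1) = Real.pi/n by
        rw [show k+2 = (k+1)+1 by omega, tau_succ hn]; ring] at this
      exact this
    rw [S_succ hn]
    rw [show k+1+1 = k+2 by omega] at hsplit ⊢
    linarith

lemma boundA {k : ℕ} (hk : k ≤ n - 1) :
    - lob (tau n k) - 2 * cb n ≤ (Real.pi/n) * S n k := by
  have hlob : (∫ t in (0:ℝ)..(tau n k), g t) = - lob (tau n k) := by
    rw [lob_eq]; ring
  rcases le_or_gt k (n/2) with hc | hc
  · have := LB1 hn k hc
    have hcb := cb_nonneg hn
    linarith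
  · have h1 := LB1 hn (n/2) (le_refl _)
    have h2 := LB2 hn k hc hk
    -- S n k = S n (n/2) + (S n k - S n (n/2))
    have hsplit1 := integral_add_adjacent_intervals
      (gII (tau_mem (j := 0) hn (by omega)) (tau_mem (j := n/2) hn (by omega)))
      (gII (tau_mem (j := n/2) hn (by omega)) (tau_mem (j := n/2+1) hn (by omega)))
    have hsplit2 := integral_add_adjacent_intervals
      (gII (tau_mem (j := 0) hn (by omega)) (tau_mem (j := n/2+1) hn (by omega)))
      (gII (tau_mem (j := n/2+1) hn (by omega)) (tau_mem (j := k+1) hn (by omega)))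
    have hsplit3 := integral_add_adjacent_intervals
      (gII (tau_mem (j := 0) hn (by omega)) (tau_mem (j := k) hn (by omega)))
      (gII (tau_mem (j := k) hn (by omega)) (tau_mem (j := k+1) hn (by omega)))
    rw [tau_zero hn] at hsplit1 hsplit2 hsplit3
    have hc1 := cellb hn (by omega : n/2 + 1 ≤ n)
    have hc2 := cellb hn (by omega : k + 1 ≤ n)
    have habs1 := abs_le.1 hc1
    have habs2 := abs_le.1 hc2
    linarith

lemma UB1 : ∀ k, k + 1 ≤ n/2 → (Real.pi/n) * S n k ≤ ∫ t in (tau n 1)..(tau n (k+1)), g t := by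
  intro k
  induction k with
  | zero => intro _; rw [S_zero hn]; simp
  | succ k ih =>
    intro hk
    have ih' := ih (by omega)
    have hsplit := integral_add_adjacent_intervals
      (gII (tau_mem (j := 1) hn (by omega)) (tau_mem (j := k+1) hn (by omega)))
      (gII (tau_mem (j := k+1) hn (by omega)) (tau_mem (j := k+2) hn (by omega)))
    have hcell : (Real.pi/n) * g (tau n (k+1)) ≤ ∫ t in (tau n (k+1))..(tau n (k+2)), g t := by
      have htpos : 0 < tau n (k+1) := by
        have h := hstep hn
        calc (0:ℝ) < Real.pi/n := h
        _ = tau n 1 := by rw [tau]; push_cast; ring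
        _ ≤ tau n (k+1) := tau_mono (i := 1) (j := k+1) hn (by omega)
      have := cell_up' htpos (tau_mono (i := k+1) (j := k+2) hn (by omega))
        (tau_half_le (j := k+2) hn (by omega))
      rw [show tau n (k+2) - tau n (k+1) = Real.pi/n by
        rw [show k+2 = (k+1)+1 by omega, tau_succ hn]; ring] at this
      exact this
    rw [S_succ hn, show k+1+1 = k+2 by omega] at *
    rw [mul_add]
    linarith

lemma UB2 : ∀ k, n/2 + 1 ≤ k → k ≤ n - 1 →
    (Real.pi/n) * (S n k - S n (n/2+1)) ≤ ∫ t in (tau n (n/2+1))..(tau n k), g t := by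
  intro k hk
  induction k, hk using Nat.le_induction with
  | base => intro _; simp
  | succ k hk ih =>
    intro hk1
    have ih' := ih (by omega)
    have hsplit := integral_add_adjacent_intervals
      (gII (tau_mem (j := n/2+1) hn (by omega)) (tau_mem (j := k) hn (by omega)))
      (gII (tau_mem (j := k) hn (by omega)) (tau_mem (j := k+1) hn (by omega)))
    have hcell : (Real.pi/n) * g (tau n (k+1)) ≤ ∫ t in (tau n k)..(tau n (k+1)), g t := by
      have := cell_anti_ub'
        (le_trans (tau_half_ge hn (le_refl _)) (tau_mono (i := n/2+1) (j := k) hn (by omega)))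
        (tau_mono (i := k) (j := k+1) hn (by omega)) (tau_lt_pi (j := k+1) hn (by omega))
      rw [show tau n (k+1) - tau n k = Real.pi/n by rw [tau_succ hn]; ring] at this
      exact this
    rw [S_succ hn]
    have e : (Real.pi/n) * (S n k + g (tau n (k+1)) - S n (n/2+1))
        = (Real.pi/n) * (S n k - S n (n/2+1)) + (Real.pi/n) * g (tau n (k+1)) := by ring
    rw [e]
    linarith

lemma boundB {k : ℕ} (hk : k ≤ n - 1) :
    (Real.pi/n) * S n k ≤ - lob (tau n k) + 6 * cb n := by
  have hcb := cb_nonneg hn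
  have hh := hstep hn
  have hlogterm : (Real.pi/n) * g (tau n (n/2)) ≤ cb n := by
    have h1 := g_le_log_two (tau n (n/2))
    have := hstep_le_cb hn
    nlinarith [log_two_le_one]
  have hlogterm1 : (Real.pi/n) * g (tau n (n/2+1)) ≤ cb n := by
    have h1 := g_le_log_two (tau n (n/2+1))
    have := hstep_le_cb hn
    nlinarith [log_two_le_one]
  -- neat form of case k+1 ≤ n/2
  have case1 : ∀ j, j + 1 ≤ n/2 → (Real.pi/n) * S n j ≤ - lob (tau n j) + 2 * cb n := by
    intro j hj
    have h1 := UB1 hn j hj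
    have hsplit1 := integral_add_adjacent_intervals
      (gII (tau_mem (j := 0) hn (by omega)) (tau_mem (j := 1) hn (by omega)))
      (gII (tau_mem (j := 1) hn (by omega)) (tau_mem (j := j+1) hn (by omega)))
    have hsplit2 := integral_add_adjacent_intervals
      (gII (tau_mem (j := 0) hn (by omega)) (tau_mem (j := j) hn (by omega)))
      (gII (tau_mem (j := j) hn (by omega)) (tau_mem (j := j+1) hn (by omega)))
    rw [tau_zero hn] at hsplit1 hsplit2
    have hc1 := abs_le.1 (cellb (j := 0) hn (by omega))
    have hc2 := abs_le.1 (cellb (j := j) hn (by omega))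
    rw [tau_zero hn] at hc1
    have hlob : (∫ t in (0:ℝ)..(tau n j), g t) = - lob (tau n j) := by rw [lob_eq]; ring
    linarith [hc1.1, hc1.2, hc2.1, hc2.2]
  -- case k = n/2
  have casep : (Real.pi/n) * S n (n/2) ≤ - lob (tau n (n/2)) + 4 * cb n := by
    have hps : n/2 = (n/2 - 1) + 1 := by omega
    have h1 := case1 (n/2 - 1) (by omega)
    have hS : S n (n/2) = S n (n/2 - 1) + g (tau n (n/2)) := by
      rw [hps, S_succ hn, ← hps]
    have hshift : - lob (tau n (n/2 - 1)) ≤ - lob (tau n (n/2)) + cb n := by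
      have hd := lob_diff (tau_mem (j := n/2 - 1) hn (by omega)) (tau_mem (j := n/2) hn (by omega))
      have hc := cellb (j := n/2 - 1) hn (by omega)
      rw [show n/2 - 1 + 1 = n/2 from by omega, hd] at hc
      have h3 := abs_le.1 hc
      linarith [h3.1]
    rw [hS, mul_add]
    linarith
  rcases le_or_gt (k+1) (n/2) with hc | hc
  · have := case1 k hc; linarith
  · rcases eq_or_lt_of_le (by omega : n/2 ≤ k) with he | he
    · rw [← he]; linarith
    · -- k ≥ n/2 + 1
      have hk2 : n/2 + 1 ≤ k := by omega
      have h2 := UB2 hn k hk2 hk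
      have hS1 : S n (n/2+1) = S n (n/2) + g (tau n (n/2+1)) := S_succ hn (n/2)
      have hint : (∫ t in (tau n (n/2+1))..(tau n k), g t)
          = lob (tau n (n/2+1)) - lob (tau n k) :=
        lob_diff (tau_mem (j := n/2+1) hn (by omega)) (tau_mem (j := k) hn (by omega))
      have hshift : - lob (tau n (n/2)) ≤ - lob (tau n (n/2+1)) + cb n := by
        have hd := lob_diff (tau_mem (j := n/2) hn (by omega))
          (tau_mem (j := n/2+1) hn (by omega))
        have hc := abs_le.1 (cellb (j := n/2) hn (by omega))
        rw [hd] at hc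
        linarith [hc.1]
      have e : (Real.pi/n) * S n k
          = (Real.pi/n) * (S n k - S n (n/2+1)) + (Real.pi/n) * S n (n/2)
            + (Real.pi/n) * g (tau n (n/2+1)) := by rw [hS1]; ring
      rw [hint] at h2
      rw [e]
      linarith

lemma per_letter (hCL : ∀ a m : ℝ, 0 ≤ a → 0 ≤ m → a + m ≤ Real.pi →
      lob m + 2 * (lob a - lob (a + m)) ≤ 4 * lob (Real.pi/4))
    {m x : ℕ} (hxm : x + m ≤ n - 1) :
    (Real.pi/n) * (- S n m + 2 * (S n (x+m) - S n x)) ≤ 4 * lob (Real.pi/4) + 18 * cb n := by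
  have hA1 := boundA hn (k := m) (by omega)
  have hA2 := boundA hn (k := x) (by omega)
  have hB := boundB hn (k := x+m) hxm
  have hCLa := hCL (tau n x) (tau n m) (tau_nonneg hn x) (tau_nonneg hn m)
    (by rw [← tau_add hn]; exact tau_le_pi hn (by omega))
  rw [← tau_add hn] at hCLa
  have hcb := cb_nonneg hn
  nlinarith [hA1, hA2, hB, hCLa]


lemma per_letter' {m x : ℕ} (hxm : x + m ≤ n - 1) :
    (Real.pi/n) * (- S n m + 2 * (S n (x+m) - S n x)) ≤ 4 * lob (Real.pi/4) + 18 * cb n :=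
  per_letter hn (fun a m ha hm hs => CL ha hm hs) hxm

end Discrete

lemma abs_qf {n k : ℕ} (hn : 8 ≤ n) (hk : k ≤ n - 1) :
    ‖qf n k‖ = Real.exp (S n k) := by
  rw [qf, norm_prod, S, Real.exp_sum]
  apply Finset.prod_congr rfl
  intro j hj
  rw [Finset.mem_Icc] at hj
  have hτpos : 0 < tau n j := by
    rw [tau]
    have h1 : (0:ℝ) < j := by exact_mod_cast (by omega : 0 < j)
    have := npos hn
    positivity
  have hτlt : tau n j < Real.pi := tau_lt_pi hn (by omega)
  have hsin : 0 < Real.sin (tau n j) := Real.sin_pos_of_pos_of_lt_pi hτpos hτlt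
  have e1 : ((j:ℂ) * (Real.pi:ℂ) / (n:ℂ)) = ((tau n j : ℝ) : ℂ) := by
    rw [tau]; push_cast; ring
  rw [e1, ← Complex.ofReal_sin, norm_mul, norm_mul, Complex.norm_I, Complex.norm_two,
    Complex.norm_real, Real.norm_eq_abs, g, Real.exp_log (by positivity : (0:ℝ) < |2 * Real.sin (tau n j)|)]
  rw [_root_.abs_of_nonneg hsin.le, _root_.abs_of_nonneg (by positivity : (0:ℝ) ≤ 2 * Real.sin (tau n j))]
  ring

lemma exp_pow (x : ℝ) (k : ℕ) : (Real.exp x)^k = Real.exp (k*x) := (Real.exp_nat_mul x k).symm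

noncomputable def Texp (n m a b c d : ℕ) : ℝ :=
  -(4:ℝ) * S n m + 2*((S n (a+m) + S n (b+m) + S n (c+m) + S n (d+m))
    - (S n a + S n b + S n c + S n d))

lemma abs_term {n m a b c d : ℕ} (hn : 8 ≤ n) (hm : m ≤ n - 1) (ha : a + m ≤ n - 1)
    (hb : b + m ≤ n - 1) (hc : c + m ≤ n - 1) (hd : d + m ≤ n - 1) :
    ‖Complex.exp (2 * Real.pi * Complex.I * ((a : ℂ) - c) * ((d : ℂ) - b) / n) *
        ((qf n m)⁻¹) ^ 4 *
        ((qf n (a + m) * qf n (b + m) * qf n (c + m) * qf n (d + m)) /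
            (qf n a * qf n b * qf n c * qf n d)) ^ 2‖ = Real.exp (Texp n m a b c d) := by
  have hph : ‖Complex.exp (2 * Real.pi * Complex.I * ((a : ℂ) - c) * ((d : ℂ) - b) / n)‖
      = 1 := by
    have e : (2 * (Real.pi:ℂ) * Complex.I * ((a : ℂ) - c) * ((d : ℂ) - b) / n)
        = ((2 * Real.pi * ((a:ℝ) - c) * ((d:ℝ) - b) / n : ℝ) : ℂ) * Complex.I := by
      push_cast; ring
    rw [e, Complex.norm_exp]
    simp
  rw [norm_mul, norm_mul, hph, one_mul, norm_pow, norm_inv, norm_pow, norm_div,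
    norm_mul, norm_mul, norm_mul, norm_mul, norm_mul, norm_mul]
  rw [abs_qf hn hm, abs_qf hn ha, abs_qf hn hb, abs_qf hn hc, abs_qf hn hd,
    abs_qf hn (by omega : a ≤ n - 1), abs_qf hn (by omega : b ≤ n - 1),
    abs_qf hn (by omega : c ≤ n - 1), abs_qf hn (by omega : d ≤ n - 1)]
  rw [← Real.exp_neg, ← Real.exp_add, ← Real.exp_add, ← Real.exp_add, ← Real.exp_add,
    ← Real.exp_add, ← Real.exp_add, ← Real.exp_sub, exp_pow, exp_pow, ← Real.exp_add]
  congr 1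
  rw [Texp]
  push_cast
  ring

noncomputable def Tmax (n : ℕ) : ℝ := ((n:ℝ)/Real.pi) * (16 * lob (Real.pi/4) + 72 * cb n)

lemma Texp_le {n m a b c d : ℕ} (hn : 8 ≤ n) (ha : a + m ≤ n - 1)
    (hb : b + m ≤ n - 1) (hc : c + m ≤ n - 1) (hd : d + m ≤ n - 1) :
    Texp n m a b c d ≤ Tmax n := by
  have h1 := per_letter' hn ha
  have h2 := per_letter' hn hb
  have h3 := per_letter' hn hc
  have h4 := per_letter' hn hd
  have hsum : (Real.pi/n) * Texp n m a b c d ≤ 16 * lob (Real.pi/4) + 72 * cb n := by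
    rw [Texp]
    nlinarith [h1, h2, h3, h4]
  have hn0 := npos hn
  have hπ := Real.pi_pos
  have hid : ((n:ℝ)/Real.pi) * ((Real.pi/n) * Texp n m a b c d) = Texp n m a b c d := by
    field_simp
  calc Texp n m a b c d = ((n:ℝ)/Real.pi) * ((Real.pi/n) * Texp n m a b c d) := hid.symm
  _ ≤ ((n:ℝ)/Real.pi) * (16 * lob (Real.pi/4) + 72 * cb n) :=
      mul_le_mul_of_nonneg_left hsum (by positivity)
  _ = Tmax n := rfl

lemma sum_abs_le {n : ℕ} {s : Finset ℕ} {f : ℕ → ℂ} {B : ℝ} (hcard : s.card ≤ n) (hB : 0 ≤ B)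
    (h : ∀ i ∈ s, ‖f i‖ ≤ B) : ‖∑ i ∈ s, f i‖ ≤ (n:ℝ) * B := by
  have hc : (s.card : ℝ) ≤ n := by exact_mod_cast hcard
  calc ‖∑ i ∈ s, f i‖ ≤ ∑ i ∈ s, ‖f i‖ := norm_sum_le _ _
  _ ≤ ∑ _i ∈ s, B := Finset.sum_le_sum h
  _ = (s.card : ℝ) * B := by rw [Finset.sum_const, nsmul_eq_mul]
  _ ≤ (n:ℝ) * B := by nlinarith

lemma F_abs_le {n : ℕ} (hn : 8 ≤ n) :
    ‖F n‖ ≤ (n:ℝ)^5 * Real.exp (Tmax n) := by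
  have hB : (0:ℝ) ≤ Real.exp (Tmax n) := (Real.exp_pos _).le
  have hn5 : ‖F n‖
      ≤ (n:ℝ) * ((n:ℝ) * ((n:ℝ) * ((n:ℝ) * ((n:ℝ) * Real.exp (Tmax n))))) := by
    rw [F]
    apply sum_abs_le (by simp) (by positivity)
    intro m hm
    rw [Finset.mem_range] at hm
    apply sum_abs_le (by simp) (by positivity)
    intro a hma
    rw [Finset.mem_range] at hma
    apply sum_abs_le (by simp) (by positivity)
    intro b hmb
    rw [Finset.mem_range] at hmb
    apply sum_abs_le (by simp) (by positivity)
    intro c hmc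
    rw [Finset.mem_range] at hmc
    apply sum_abs_le (by simp) hB
    intro d hmd
    rw [Finset.mem_range] at hmd
    rw [abs_term hn (by omega) (by omega) (by omega) (by omega) (by omega)]
    exact Real.exp_le_exp.2 (Texp_le hn (by omega) (by omega) (by omega) (by omega))
  calc ‖F n‖ ≤ _ := hn5
  _ = (n:ℝ)^5 * Real.exp (Tmax n) := by ring

noncomputable def del (n : ℕ) : ℝ := 144 * cb n + 10 * Real.pi * Real.log n / n

lemma main_ev {n : ℕ} (hn : 8 ≤ n) :
    (2 * Real.pi / n) * Real.log (‖F n‖) ≤ 32 * lob (Real.pi/4) + del n := by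
  have hn0 := npos hn
  have hπ := Real.pi_pos
  have hcb := cb_nonneg hn
  have hTmax0 : 0 ≤ Tmax n := by
    rw [Tmax]
    have := lob_pi4_nonneg
    positivity
  have hy1 : (1:ℝ) ≤ (n:ℝ)^5 * Real.exp (Tmax n) := by
    have h1 : (1:ℝ) ≤ (n:ℝ) := by
      have : (8:ℝ) ≤ (n:ℝ) := by exact_mod_cast hn
      linarith
    have h2 : (1:ℝ) ≤ Real.exp (Tmax n) := Real.one_le_exp hTmax0
    have h3 : (1:ℝ) ≤ (n:ℝ)^5 := one_le_pow₀ h1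
    nlinarith
  have hlog : Real.log (‖F n‖) ≤ 5 * Real.log n + Tmax n := by
    have hlogeq : Real.log ((n:ℝ)^5 * Real.exp (Tmax n)) = 5 * Real.log n + Tmax n := by
      rw [Real.log_mul (by positivity) (Real.exp_ne_zero _), Real.log_pow, Real.log_exp]
      push_cast; ring
    rcases eq_or_lt_of_le (norm_nonneg (F n)) with h | h
    · rw [← h, Real.log_zero, ← hlogeq]
      exact Real.log_nonneg hy1
    · rw [← hlogeq]
      exact Real.log_le_log h (F_abs_le hn)
  have hstep : (2 * Real.pi / n) * Real.log (‖F n‖)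
      ≤ (2 * Real.pi / n) * (5 * Real.log n + Tmax n) :=
    mul_le_mul_of_nonneg_left hlog (by positivity)
  have hcomp : (2 * Real.pi / n) * (5 * Real.log n + Tmax n)
      = 32 * lob (Real.pi/4) + del n := by
    rw [Tmax, del]
    field_simp
    ring
  linarith

lemma del_tendsto : Tendsto del atTop (nhds 0) := by
  have h1 : Tendsto (fun n : ℕ => Real.pi / n) atTop (nhds 0) :=
    tendsto_const_div_atTop_nhds_zero_nat Real.pi
  have h2 : Tendsto (fun n : ℕ => Real.sqrt (Real.pi / n)) atTop (nhds 0) := by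
    have h := (Real.continuous_sqrt.tendsto 0).comp h1
    rw [Real.sqrt_zero] at h
    exact h
  have hcb : Tendsto cb atTop (nhds 0) := by
    have h := (h1.const_mul (10:ℝ)).add (h2.const_mul (8:ℝ))
    have e0 : (10:ℝ)*0 + 8*0 = 0 := by norm_num
    rw [e0] at h
    exact h
  have hlog : Tendsto (fun n : ℕ => Real.log n / n) atTop (nhds 0) := by
    have h := Real.isLittleO_log_id_atTop.tendsto_div_nhds_zero
    have := h.comp (tendsto_natCast_atTop_atTop (R := ℝ))
    exact this
  have hfin := (hcb.const_mul (144:ℝ)).add (hlog.const_mul (10 * Real.pi))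
  norm_num at hfin
  have he : del = fun x : ℕ => 144 * cb x + 10 * Real.pi * (Real.log x / x) := by
    funext x
    rw [del]
    ring
  rw [he]
  exact hfin

end VB

theorem limsup_volume_upper_bound :
    Filter.limsup (fun n : ℕ => (2 * Real.pi / n) * Real.log (‖F n‖))
      Filter.atTop ≤ 32 * lob (Real.pi / 4) := by
  set u : ℕ → ℝ := fun n => (2 * Real.pi / n) * Real.log (‖F n‖) with hu
  set v : ℕ → ℝ := fun n => 32 * lob (Real.pi / 4) + VB.del n with hv
  have hev : ∀ᶠ n in atTop, u n ≤ v n := by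
    rw [eventually_atTop]
    exact ⟨8, fun n hn => VB.main_ev hn⟩
  have hvt : Tendsto v atTop (nhds (32 * lob (Real.pi / 4))) := by
    have := (tendsto_const_nhds (x := (32 * lob (Real.pi / 4) : ℝ)) (f := atTop (α := ℕ))).add
      VB.del_tendsto
    simpa using this
  by_cases hco : Filter.IsCoboundedUnder (· ≤ ·) Filter.atTop u
  · have h1 : Filter.limsup u atTop ≤ Filter.limsup v atTop :=
      Filter.limsup_le_limsup hev hco hvt.isBoundedUnder_le
    rwa [hvt.limsup_eq] at h1
  · have hnb : ¬ BddBelow {a : ℝ | ∀ᶠ n in atTop, u n ≤ a} := by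
      intro ⟨b, hb⟩
      exact hco ⟨b, fun a ha => hb (by simpa [Filter.eventually_map] using ha)⟩
    rw [Filter.limsup_eq, Real.sInf_of_not_bddBelow hnb]
    have := VB.lob_pi4_nonneg
    linarith
end

section
/- For every integer n ≥ 4, F_n ≥ ( ∏_{j=⌊n/4⌋+1}^{⌊n/4⌋+⌊n/2⌋} 2·sin(jπ/n) )⁸ / ( ∏_{j=1}^{⌊n/2⌋} 2·sin(jπ/n) )⁴, and in particular F_n > 0. [The single-term lower bound (6.9) in the proof of Theorem 6.2, obtained by keeping only the summand with m = ⌊n/2⌋, a = b = c = d = ⌊n/4⌋.] -/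
open Finset Filter Real Complex

/-- Real version of the factorial: `∏_{j=1}^k 2 sin(jπ/n)`. -/
noncomputable def Qr (n k : ℕ) : ℝ := ∏ j ∈ Finset.Ioc 0 k, 2 * Real.sin (j * Real.pi / n)

/-- The nonnegative weight `t_x = (Qr(x+m)/Qr(x))²`. -/
noncomputable def tt (n m x : ℕ) : ℝ := (Qr n (x + m) / Qr n x) ^ 2

/-- The exponential sum `E(a,c) = ∑_d e^{2πi(a-c)d/n} t_d`. -/
noncomputable def EE (n m a c : ℕ) : ℂ :=
  ∑ d ∈ Finset.range (n - m),
    Complex.exp (2 * Real.pi * Complex.I * ((a : ℂ) - c) * d / n) * ((tt n m d : ℝ) : ℂ)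

/-- The real value of `F n`. -/
noncomputable def G (n : ℕ) : ℝ :=
  ∑ m ∈ Finset.range n, ∑ a ∈ Finset.range (n - m), ∑ c ∈ Finset.range (n - m),
    ((Qr n m) ^ 4)⁻¹ * (tt n m a * tt n m c) * Complex.normSq (EE n m a c)

lemma qf_eq (n k : ℕ) : qf n k = Complex.I ^ k * (Qr n k : ℂ) := by
  unfold qf Qr
  rw [show Finset.Icc 1 k = Finset.Ioc 0 k from rfl]
  have : ∀ j ∈ Finset.Ioc 0 k, 2 * Complex.I * Complex.sin ((j : ℂ) * Real.pi / n)
      = Complex.I * (((2 * Real.sin (j * Real.pi / n) : ℝ)) : ℂ) := by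
    intro j _
    rw [show ((j : ℂ) * Real.pi / n) = (((j * Real.pi / n : ℝ)) : ℂ) by push_cast; ring,
      ← Complex.ofReal_sin]
    push_cast; ring
  rw [Finset.prod_congr rfl this, Finset.prod_mul_distrib, Finset.prod_const,
    Nat.card_Ioc, Nat.sub_zero]
  push_cast; ring

lemma sfac_pos (n j : ℕ) (h0 : 0 < j) (h1 : j < n) : 0 < 2 * Real.sin (j * Real.pi / n) := by
  have hn : 0 < n := h0.trans h1
  have hj1 : (0:ℝ) < j := by exact_mod_cast h0
  have hjn : (j:ℝ) < n := by exact_mod_cast h1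
  have : 0 < Real.sin (j * Real.pi / n) := by
    apply Real.sin_pos_of_pos_of_lt_pi
    · have := Real.pi_pos; positivity
    · rw [div_lt_iff₀ (by exact_mod_cast hn)]
      nlinarith [Real.pi_pos]
  linarith

lemma Qr_pos (n k : ℕ) (h : k < n) : 0 < Qr n k := by
  apply Finset.prod_pos
  intro j hj
  simp only [Finset.mem_Ioc] at hj
  exact sfac_pos n j hj.1 (hj.2.trans_lt h)

lemma qf_inv_pow (n m : ℕ) : ((qf n m)⁻¹) ^ 4 = ((((Qr n m) ^ 4)⁻¹ : ℝ) : ℂ) := by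
  rw [qf_eq, inv_pow, mul_pow, pow_right_comm, Complex.I_pow_four, one_pow, one_mul]
  push_cast; ring

lemma qf_ratio (n m x : ℕ) : qf n (x + m) / qf n x
    = Complex.I ^ m * ((Qr n (x + m) / Qr n x : ℝ) : ℂ) := by
  rw [qf_eq, qf_eq, pow_add, mul_comm (Complex.I ^ x) (Complex.I ^ m), mul_assoc,
    mul_div_assoc, mul_div_mul_left _ _ (pow_ne_zero x Complex.I_ne_zero)]
  push_cast; ring

lemma hexp (n a b c d : ℕ) :
    Complex.exp (2 * Real.pi * Complex.I * ((a : ℂ) - c) * ((d : ℂ) - b) / n)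
    = Complex.exp (2 * Real.pi * Complex.I * ((a : ℂ) - c) * d / n) *
      (starRingEnd ℂ) (Complex.exp (2 * Real.pi * Complex.I * ((a : ℂ) - c) * b / n)) := by
  rw [← Complex.exp_conj, ← Complex.exp_add]
  congr 1
  simp only [map_div₀, map_mul, map_sub, Complex.conj_I, Complex.conj_ofReal, map_natCast,
    map_ofNat]
  ring

lemma Ipow8 (m : ℕ) (A B C D : ℂ) :
    ((Complex.I ^ m * A) * (Complex.I ^ m * B) * (Complex.I ^ m * C) * (Complex.I ^ m * D)) ^ 2
    = (A * B * C * D) ^ 2 := by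
  have h : ((Complex.I ^ m) ^ 4) = 1 := by
    rw [pow_right_comm, Complex.I_pow_four, one_pow]
  calc ((Complex.I ^ m * A) * (Complex.I ^ m * B) * (Complex.I ^ m * C) * (Complex.I ^ m * D)) ^ 2
      = (((Complex.I ^ m) ^ 4) * (A * B * C * D)) ^ 2 := by ring
    _ = (A * B * C * D) ^ 2 := by rw [h, one_mul]

lemma summand (n m a b c d : ℕ) :
    Complex.exp (2 * Real.pi * Complex.I * ((a : ℂ) - c) * ((d : ℂ) - b) / n) *
        ((qf n m)⁻¹) ^ 4 *
        ((qf n (a + m) * qf n (b + m) * qf n (c + m) * qf n (d + m)) /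
            (qf n a * qf n b * qf n c * qf n d)) ^ 2
    = (((((Qr n m) ^ 4)⁻¹ * (tt n m a * tt n m c)) : ℝ) : ℂ) *
      ((Complex.exp (2 * Real.pi * Complex.I * ((a : ℂ) - c) * d / n) * ((tt n m d : ℝ) : ℂ)) *
        (starRingEnd ℂ) (Complex.exp (2 * Real.pi * Complex.I * ((a : ℂ) - c) * b / n) *
          ((tt n m b : ℝ) : ℂ))) := by
  have hsplit : (qf n (a + m) * qf n (b + m) * qf n (c + m) * qf n (d + m)) /
      (qf n a * qf n b * qf n c * qf n d)
      = (qf n (a + m) / qf n a) * (qf n (b + m) / qf n b) * (qf n (c + m) / qf n c) *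
        (qf n (d + m) / qf n d) := by
    rw [div_mul_div_comm, div_mul_div_comm, div_mul_div_comm]
  rw [hsplit, qf_ratio, qf_ratio, qf_ratio, qf_ratio, Ipow8, qf_inv_pow, hexp n a b c d,
    map_mul, Complex.conj_ofReal]
  unfold tt
  push_cast
  ring

lemma collapse (s : Finset ℕ) (K : ℂ) (g : ℕ → ℂ) :
    ∑ b ∈ s, ∑ d ∈ s, K * (g d * (starRingEnd ℂ) (g b))
    = K * ((Complex.normSq (∑ d ∈ s, g d) : ℝ) : ℂ) := by
  have h : ∑ b ∈ s, ∑ d ∈ s, K * (g d * (starRingEnd ℂ) (g b))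
      = K * ((∑ d ∈ s, g d) * (starRingEnd ℂ) (∑ b ∈ s, g b)) := by
    rw [map_sum, Finset.sum_mul_sum, Finset.mul_sum]
    rw [Finset.sum_comm]
    exact Finset.sum_congr rfl fun b _ => by rw [Finset.mul_sum]
  rw [h, Complex.mul_conj]

lemma F_eq (n : ℕ) : F n = ((G n : ℝ) : ℂ) := by
  unfold F G
  push_cast
  apply Finset.sum_congr rfl; intro m _
  apply Finset.sum_congr rfl; intro a _
  rw [Finset.sum_comm]
  apply Finset.sum_congr rfl; intro c _
  calc ∑ b ∈ Finset.range (n - m), ∑ d ∈ Finset.range (n - m),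
        Complex.exp (2 * Real.pi * Complex.I * ((a : ℂ) - c) * ((d : ℂ) - b) / n) *
          ((qf n m)⁻¹) ^ 4 *
          ((qf n (a + m) * qf n (b + m) * qf n (c + m) * qf n (d + m)) /
              (qf n a * qf n b * qf n c * qf n d)) ^ 2
      = ∑ b ∈ Finset.range (n - m), ∑ d ∈ Finset.range (n - m),
          (((((Qr n m) ^ 4)⁻¹ * (tt n m a * tt n m c)) : ℝ) : ℂ) *
            ((Complex.exp (2 * Real.pi * Complex.I * ((a : ℂ) - c) * d / n) *
                ((tt n m d : ℝ) : ℂ)) *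
              (starRingEnd ℂ) (Complex.exp (2 * Real.pi * Complex.I * ((a : ℂ) - c) * b / n) *
                ((tt n m b : ℝ) : ℂ))) := by
        exact Finset.sum_congr rfl fun b _ => Finset.sum_congr rfl fun d _ => summand n m a b c d
    _ = (((((Qr n m) ^ 4)⁻¹ * (tt n m a * tt n m c)) : ℝ) : ℂ) *
          ((Complex.normSq (EE n m a c) : ℝ) : ℂ) := by
        rw [collapse]; rfl
    _ = _ := by push_cast; ring

lemma tt_nonneg (n m x : ℕ) : 0 ≤ tt n m x := sq_nonneg _

lemma term_nonneg (n m a c : ℕ) :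
    0 ≤ ((Qr n m) ^ 4)⁻¹ * (tt n m a * tt n m c) * Complex.normSq (EE n m a c) := by
  have h1 := tt_nonneg n m a; have h2 := tt_nonneg n m c
  have h3 := Complex.normSq_nonneg (EE n m a c)
  positivity

theorem F_single_term_lower_bound (n : ℕ) (hn : 4 ≤ n) :
    ∃ r : ℝ, F n = (r : ℂ) ∧
      (∏ j ∈ Finset.Icc (n / 4 + 1) (n / 4 + n / 2), 2 * Real.sin (j * Real.pi / n)) ^ 8 /
          (∏ j ∈ Finset.Icc 1 (n / 2), 2 * Real.sin (j * Real.pi / n)) ^ 4 ≤ r ∧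
      0 < r := by
  refine ⟨G n, F_eq n, ?_⟩
  set m₀ := n / 2 with hm₀
  set a₀ := n / 4 with ha₀
  have hmlt : m₀ < n := by omega
  have halt : a₀ < n - m₀ := by omega
  set P := ∏ j ∈ Finset.Icc (a₀ + 1) (a₀ + m₀), 2 * Real.sin (j * Real.pi / n) with hP
  set Q := ∏ j ∈ Finset.Icc 1 m₀, 2 * Real.sin (j * Real.pi / n) with hQ
  have hQeq : Qr n m₀ = Q := rfl
  have hQpos : 0 < Q := hQeq ▸ Qr_pos n m₀ hmlt
  have hPpos : 0 < P := by
    apply Finset.prod_pos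
    intro j hj
    simp only [Finset.mem_Icc] at hj
    exact sfac_pos n j (by omega) (by omega)
  have hQr_split : Qr n (a₀ + m₀) = Qr n a₀ * P := by
    rw [hP, Finset.Icc_add_one_left_eq_Ioc]
    unfold Qr
    rw [← Finset.prod_Ioc_consecutive _ (Nat.zero_le a₀) (Nat.le_add_right a₀ m₀)]
  have htt : tt n m₀ a₀ = P ^ 2 := by
    unfold tt
    rw [hQr_split, mul_div_cancel_left₀ _ (Qr_pos n a₀ (by omega)).ne']
  have hEE : EE n m₀ a₀ a₀ = ((∑ d ∈ Finset.range (n - m₀), tt n m₀ d : ℝ) : ℂ) := by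
    unfold EE
    push_cast
    apply Finset.sum_congr rfl
    intro d _
    rw [sub_self, mul_zero, zero_mul, zero_div, Complex.exp_zero, one_mul]
  have hSle : tt n m₀ a₀ ≤ ∑ d ∈ Finset.range (n - m₀), tt n m₀ d :=
    Finset.single_le_sum (fun d _ => tt_nonneg n m₀ d) (Finset.mem_range.2 halt)
  have hnormSq : tt n m₀ a₀ * tt n m₀ a₀ ≤ Complex.normSq (EE n m₀ a₀ a₀) := by
    rw [hEE, Complex.normSq_ofReal]
    exact mul_le_mul hSle hSle (tt_nonneg n m₀ a₀) ((tt_nonneg n m₀ a₀).trans hSle)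
  set V := ((Qr n m₀) ^ 4)⁻¹ * (tt n m₀ a₀ * tt n m₀ a₀) * (tt n m₀ a₀ * tt n m₀ a₀) with hV
  have htarget : P ^ 8 / Q ^ 4 = V := by
    rw [hV, htt, hQeq]
    field_simp
  have hVle : V ≤ ((Qr n m₀) ^ 4)⁻¹ * (tt n m₀ a₀ * tt n m₀ a₀) *
      Complex.normSq (EE n m₀ a₀ a₀) := by
    apply mul_le_mul_of_nonneg_left hnormSq
    have := tt_nonneg n m₀ a₀
    positivity
  have hterm_le_G : ((Qr n m₀) ^ 4)⁻¹ * (tt n m₀ a₀ * tt n m₀ a₀) *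
      Complex.normSq (EE n m₀ a₀ a₀) ≤ G n := by
    unfold G
    calc ((Qr n m₀) ^ 4)⁻¹ * (tt n m₀ a₀ * tt n m₀ a₀) * Complex.normSq (EE n m₀ a₀ a₀)
        ≤ ∑ c ∈ Finset.range (n - m₀),
            ((Qr n m₀) ^ 4)⁻¹ * (tt n m₀ a₀ * tt n m₀ c) * Complex.normSq (EE n m₀ a₀ c) :=
          Finset.single_le_sum (fun c _ => term_nonneg n m₀ a₀ c) (Finset.mem_range.2 halt)
      _ ≤ ∑ a ∈ Finset.range (n - m₀), ∑ c ∈ Finset.range (n - m₀),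
            ((Qr n m₀) ^ 4)⁻¹ * (tt n m₀ a * tt n m₀ c) * Complex.normSq (EE n m₀ a c) :=
          Finset.single_le_sum
            (fun a _ => Finset.sum_nonneg fun c _ => term_nonneg n m₀ a c)
            (Finset.mem_range.2 halt)
      _ ≤ _ :=
          Finset.single_le_sum (f := fun m => ∑ a ∈ Finset.range (n - m),
              ∑ c ∈ Finset.range (n - m),
              ((Qr n m) ^ 4)⁻¹ * (tt n m a * tt n m c) * Complex.normSq (EE n m a c))
            (fun m _ => Finset.sum_nonneg fun a _ => Finset.sum_nonneg fun c _ =>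
              term_nonneg n m a c)
            (Finset.mem_range.2 hmlt)
  constructor
  · rw [htarget]
    exact hVle.trans hterm_le_G
  · have h0 : 0 < P ^ 8 / Q ^ 4 := by positivity
    rw [htarget] at h0
    exact h0.trans_le (hVle.trans hterm_le_G)
end
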